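/- Let n ≥ 1, let S be a symmetric positive definite real n×n matrix, and let C ⊆ ℝⁿ be a nonempty closed convex set with 0 ∈ C. Then: (i) for every z ∈ ℝⁿ the function q ↦ ⟨S⁻¹(q − S z), q − S z⟩ has a unique minimizer p(z) over C; (ii) for every z ∈ ℝⁿ, ψ(z) = ½ ⟨S z, z⟩ − ½ ⟨S⁻¹(p(z) − S z), p(z) − S z⟩; (iii) the map z ↦ p(z) is Lipschitz continuous on ℝⁿ; and (iv) ψ is differentiable at every z ∈ ℝⁿ with gradient ∇ψ(z) = p(z). -/

import Mathlib

open Matrix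
open scoped RealInnerProductSpace

/-- The support function `h(z) = sup_{q ∈ C} ⟨q, z⟩`, with values in `[0, +∞]` (extended reals). -/
noncomputable def hsupp {n : ℕ} (C : Set (EuclideanSpace ℝ (Fin n)))
    (z : EuclideanSpace ℝ (Fin n)) : EReal :=
  ⨆ q ∈ C, ((⟪q, z⟫ : ℝ) : EReal)

/-- The infimal convolution
`ψ(z) = inf_{z'} { ½ ⟨S(z - z'), z - z'⟩ + h(z') }`. -/
noncomputable def psi {n : ℕ} (S : Matrix (Fin n) (Fin n) ℝ)
    (C : Set (EuclideanSpace ℝ (Fin n))) (z : EuclideanSpace ℝ (Fin n)) : EReal :=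
  ⨅ z' : EuclideanSpace ℝ (Fin n),
    (((2⁻¹ * ⟪Matrix.toEuclideanLin S (z - z'), z - z'⟫ : ℝ) : EReal) + hsupp C z')

variable {n : ℕ}

local notation "E" => EuclideanSpace ℝ (Fin n)

-- inner vs mulVec
lemma inner_toEuclideanLin (M : Matrix (Fin n) (Fin n) ℝ) (x y : E) :
    ⟪Matrix.toEuclideanLin M x, y⟫ = dotProduct (star (WithLp.equiv 2 _ y)) (M *ᵥ (WithLp.equiv 2 _ x)) := by
  simp [PiLp.inner_apply, Matrix.toEuclideanLin_apply, dotProduct, mul_comm]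

lemma symm_toEuclideanLin {M : Matrix (Fin n) (Fin n) ℝ} (hM : M.IsHermitian) (x y : E) :
    ⟪Matrix.toEuclideanLin M x, y⟫ = ⟪x, Matrix.toEuclideanLin M y⟫ :=
  (Matrix.isHermitian_iff_isSymmetric.mp hM) x y

lemma posdef_inner_pos {M : Matrix (Fin n) (Fin n) ℝ} (hM : M.PosDef) {x : E} (hx : x ≠ 0) :
    0 < ⟪Matrix.toEuclideanLin M x, x⟫ := by
  rw [inner_toEuclideanLin]
  exact hM.dotProduct_mulVec_pos (by simpa using hx)

lemma toEuclideanLin_inv_comp {M : Matrix (Fin n) (Fin n) ℝ} (hM : M.PosDef) (x : E) :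
    Matrix.toEuclideanLin M (Matrix.toEuclideanLin M⁻¹ x) = x := by
  have h : M * M⁻¹ = 1 := Matrix.mul_nonsing_inv _ (isUnit_iff_ne_zero.mpr hM.det_pos.ne')
  apply (WithLp.equiv 2 (Fin n → ℝ)).injective
  simp [Matrix.ofLp_toEuclideanLin_apply, Matrix.mulVec_mulVec, h]

lemma coercive {M : Matrix (Fin n) (Fin n) ℝ} (hn : 1 ≤ n) (hM : M.PosDef) :
    ∃ c : ℝ, 0 < c ∧ ∀ x : E, c * ‖x‖^2 ≤ ⟪Matrix.toEuclideanLin M x, x⟫ := by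
  have : Nontrivial E := by
    have : 0 < Module.finrank ℝ E := by simp [finrank_euclideanSpace]; omega
    exact Module.nontrivial_of_finrank_pos this
  obtain ⟨u, hu, hmin⟩ := (isCompact_sphere (0:E) 1).exists_isMinOn
    (NormedSpace.sphere_nonempty.mpr zero_le_one)
    (Continuous.continuousOn (Continuous.inner
      (Matrix.toEuclideanLin M).continuous_of_finiteDimensional continuous_id :
      Continuous fun x : E => ⟪Matrix.toEuclideanLin M x, x⟫))
  have huz : u ≠ 0 := by
    intro h; rw [h] at hu; simp at hu
  refine ⟨_, posdef_inner_pos hM huz, fun x => ?_⟩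
  rcases eq_or_ne x 0 with rfl | hx
  · simp
  · have hnx : ‖x‖ ≠ 0 := norm_ne_zero_iff.mpr hx
    have hsx : (‖x‖⁻¹ • x) ∈ Metric.sphere (0:E) 1 := by
      simp [norm_smul, abs_of_nonneg (norm_nonneg x), inv_mul_cancel₀ hnx]
    have := hmin hsx
    simp only [Set.mem_setOf_eq] at this
    have hexp : ⟪Matrix.toEuclideanLin M (‖x‖⁻¹ • x), ‖x‖⁻¹ • x⟫
        = ‖x‖⁻¹ * ‖x‖⁻¹ * ⟪Matrix.toEuclideanLin M x, x⟫ := by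
      rw [LinearMap.map_smul, real_inner_smul_left, real_inner_smul_right]; ring
    rw [hexp] at this
    have h2 : ⟪Matrix.toEuclideanLin M u, u⟫ * ‖x‖^2 ≤ ⟪Matrix.toEuclideanLin M x, x⟫ := by
      calc ⟪Matrix.toEuclideanLin M u, u⟫ * ‖x‖^2
          ≤ (‖x‖⁻¹ * ‖x‖⁻¹ * ⟪Matrix.toEuclideanLin M x, x⟫) * ‖x‖^2 := by
            apply mul_le_mul_of_nonneg_right this (by positivity)
        _ = ⟪Matrix.toEuclideanLin M x, x⟫ := by
            have h9 : ‖x‖⁻¹ * ‖x‖⁻¹ * ⟪Matrix.toEuclideanLin M x, x⟫ * ‖x‖^2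
                = (‖x‖⁻¹*‖x‖)*(‖x‖⁻¹*‖x‖)*⟪Matrix.toEuclideanLin M x, x⟫ := by rw [sq]; ring
            rw [h9, inv_mul_cancel₀ hnx]; ring
    linarith [h2]

lemma toEuclideanLin_comp_inv {M : Matrix (Fin n) (Fin n) ℝ} (hM : M.PosDef) (x : E) :
    Matrix.toEuclideanLin M⁻¹ (Matrix.toEuclideanLin M x) = x := by
  have h : M⁻¹ * M = 1 := Matrix.nonsing_inv_mul _ (isUnit_iff_ne_zero.mpr hM.det_pos.ne')
  apply (WithLp.equiv 2 (Fin n → ℝ)).injective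
  simp [Matrix.ofLp_toEuclideanLin_apply, Matrix.mulVec_mulVec, h]

/-- Quadratic expansion around `p`. -/
lemma quad_expand {N : Matrix (Fin n) (Fin n) ℝ} (hN : N.IsHermitian) (w p q : E) :
    ⟪Matrix.toEuclideanLin N (q - w), q - w⟫ =
      ⟪Matrix.toEuclideanLin N (p - w), p - w⟫
      + 2 * ⟪Matrix.toEuclideanLin N (p - w), q - p⟫
      + ⟪Matrix.toEuclideanLin N (q - p), q - p⟫ := by
  have hq : q - w = (p - w) + (q - p) := by abel
  rw [hq, map_add, inner_add_left, inner_add_right, inner_add_right]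
  rw [symm_toEuclideanLin hN (q - p) (p - w), real_inner_comm (q-p) (Matrix.toEuclideanLin N (p-w))]
  ring

lemma exists_min (hn : 1 ≤ n) {N : Matrix (Fin n) (Fin n) ℝ} (hN : N.PosDef)
    {C : Set E} (hCcl : IsClosed C) (hCne : C.Nonempty) (w : E) :
    ∃ p ∈ C, ∀ q ∈ C,
      ⟪Matrix.toEuclideanLin N (p - w), p - w⟫ ≤ ⟪Matrix.toEuclideanLin N (q - w), q - w⟫ := by
  obtain ⟨c, hc, hcoer⟩ := coercive hn hN
  obtain ⟨q0, hq0⟩ := hCne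
  obtain ⟨Q, hQ⟩ : ∃ Q : E → ℝ, Q = fun q => ⟪Matrix.toEuclideanLin N (q - w), q - w⟫ :=
    ⟨_, rfl⟩
  have hQcont : Continuous Q := by
    rw [hQ]
    apply Continuous.inner
    · exact ((Matrix.toEuclideanLin N).continuous_of_finiteDimensional).comp (by continuity)
    · continuity
  have hQc : ∀ q, c * ‖q - w‖^2 ≤ Q q := by
    rw [hQ]; exact fun q => hcoer (q - w)
  have hQnonneg : ∀ q, 0 ≤ Q q := fun q =>
    le_trans (mul_nonneg hc.le (by positivity)) (hQc q)
  set s := Real.sqrt (Q q0 / c) with hs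
  have hsnn : 0 ≤ s := Real.sqrt_nonneg _
  have hsq : s ^ 2 = Q q0 / c := Real.sq_sqrt (div_nonneg (hQnonneg q0) hc.le)
  have hq0ball : q0 ∈ Metric.closedBall w (s + 1) := by
    rw [Metric.mem_closedBall, dist_eq_norm]
    have h2 : ‖q0 - w‖ ^ 2 ≤ Q q0 / c := by rw [le_div_iff₀ hc]; linarith [hQc q0]
    have h3 : ‖q0 - w‖ ≤ s := by
      rw [hs, ← Real.sqrt_sq (norm_nonneg _)]
      exact Real.sqrt_le_sqrt h2
    linarith
  have hKcompact : IsCompact (C ∩ Metric.closedBall w (s + 1)) :=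
    (isCompact_closedBall w (s+1)).of_isClosed_subset (hCcl.inter Metric.isClosed_closedBall)
      Set.inter_subset_right
  obtain ⟨p, hpK, hpmin⟩ := hKcompact.exists_isMinOn ⟨q0, hq0, hq0ball⟩ hQcont.continuousOn
  have key : ∀ q ∈ C, Q p ≤ Q q := by
    intro q hq
    by_cases hqball : q ∈ Metric.closedBall w (s + 1)
    · exact hpmin ⟨hq, hqball⟩
    · have h4 : s + 1 < ‖q - w‖ := by
        rw [Metric.mem_closedBall, dist_eq_norm, not_le] at hqball; exact hqball
      have h5 : Q q0 < Q q := by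
        have h6 := hQc q
        have h7 : c * s ^ 2 = Q q0 := by rw [hsq]; field_simp
        have h8 : (s+1)^2 ≤ ‖q - w‖^2 := by nlinarith
        have h9 : c*(s+1)^2 ≤ c*‖q - w‖^2 := mul_le_mul_of_nonneg_left h8 hc.le
        have h10 : (0:ℝ) < c * (2*s+1) := mul_pos hc (by linarith)
        nlinarith
      exact le_trans (hpmin ⟨hq0, hq0ball⟩) h5.le
  refine ⟨p, hpK.1, fun q hq => ?_⟩
  have := key q hq
  rwa [hQ] at this

lemma min_to_VI {N : Matrix (Fin n) (Fin n) ℝ} (hN : N.PosDef) {C : Set E}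
    (hCco : Convex ℝ C) {w p : E} (hp : p ∈ C)
    (hmin : ∀ q ∈ C, ⟪Matrix.toEuclideanLin N (p - w), p - w⟫ ≤
      ⟪Matrix.toEuclideanLin N (q - w), q - w⟫) :
    ∀ q ∈ C, ⟪Matrix.toEuclideanLin N (w - p), q - p⟫ ≤ 0 := by
  intro q hq
  set a := ⟪Matrix.toEuclideanLin N (p - w), q - p⟫ with ha
  set b := ⟪Matrix.toEuclideanLin N (q - p), q - p⟫ with hb
  have hbnn : 0 ≤ b := by
    rcases eq_or_ne (q - p) 0 with h|h
    · rw [hb, h]; simp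
    · exact (posdef_inner_pos hN h).le
  have key : ∀ t : ℝ, 0 < t → t ≤ 1 → 0 ≤ 2 * (t * a) + t^2 * b := by
    intro t ht0 ht1
    have hm : p + t • (q - p) ∈ C := by
      have h0 := hCco hp hq (by linarith : (0:ℝ) ≤ 1 - t) ht0.le (by ring)
      convert h0 using 1
      module
    have h2 := hmin _ hm
    have h3 := quad_expand hN.1 w p (p + t • (q - p))
    have h4 : (p + t • (q - p)) - p = t • (q - p) := by abel
    rw [h4] at h3
    rw [real_inner_smul_right] at h3
    rw [LinearMap.map_smul, real_inner_smul_left, real_inner_smul_right] at h3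
    rw [h3] at h2
    simp only [← ha, ← hb] at h2
    nlinarith [h2]
  have hannneg : 0 ≤ a := by
    by_contra hlt
    push_neg at hlt
    set t := min 1 ((-a)/(b+1)) with ht
    have ht0 : 0 < t := lt_min one_pos (div_pos (neg_pos.mpr hlt) (by linarith))
    have ht1 : t ≤ 1 := min_le_left _ _
    have htb : t * (b+1) ≤ -a := by
      have h5 : t ≤ (-a)/(b+1) := min_le_right _ _
      rw [← le_div_iff₀ (by linarith : (0:ℝ) < b + 1)]
      exact h5
    have h6 := key t ht0 ht1
    nlinarith [mul_le_mul_of_nonneg_left htb ht0.le, mul_pos ht0 ht0,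
      mul_pos ht0 (neg_pos.mpr hlt)]
  have hwp : w - p = -(p - w) := by abel
  rw [hwp, map_neg, inner_neg_left]
  linarith

lemma quad_expand0 {N : Matrix (Fin n) (Fin n) ℝ} (hN : N.IsHermitian) (v w : E) :
    ⟪Matrix.toEuclideanLin N (w - v), w - v⟫ =
      ⟪Matrix.toEuclideanLin N v, v⟫ - 2 * ⟪Matrix.toEuclideanLin N v, w⟫
      + ⟪Matrix.toEuclideanLin N w, w⟫ := by
  have h := quad_expand hN v 0 w
  simp only [zero_sub, sub_zero, map_neg, inner_neg_left, inner_neg_right, neg_neg] at h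
  linarith [h]

lemma psi_le (S : Matrix (Fin n) (Fin n) ℝ) (C : Set E) (z z' : E) :
    psi S C z ≤ ((2⁻¹ * ⟪Matrix.toEuclideanLin S (z - z'), z - z'⟫ : ℝ) : EReal) + hsupp C z' :=
  iInf_le _ z'

lemma le_psi (S : Matrix (Fin n) (Fin n) ℝ) (C : Set E) (z : E) (X : EReal)
    (h : ∀ z', X ≤ ((2⁻¹ * ⟪Matrix.toEuclideanLin S (z - z'), z - z'⟫ : ℝ) : EReal) + hsupp C z') :
    X ≤ psi S C z :=
  le_iInf h

lemma hsupp_ge (C : Set E) (z' : E) {q : E} (hq : q ∈ C) :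
    ((⟪q, z'⟫ : ℝ) : EReal) ≤ hsupp C z' :=
  le_iSup₂ (f := fun q (_ : q ∈ C) => ((⟪q, z'⟫ : ℝ) : EReal)) q hq

lemma hsupp_le (C : Set E) (z' : E) (r : ℝ) (h : ∀ q ∈ C, ⟪q, z'⟫ ≤ r) :
    hsupp C z' ≤ (r : EReal) :=
  iSup₂_le fun q hq => EReal.coe_le_coe_iff.mpr (h q hq)

set_option maxHeartbeats 2000000 in
theorem stmt16 {n : ℕ} (hn : 1 ≤ n) (S : Matrix (Fin n) (Fin n) ℝ) (hS : S.PosDef)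
    (C : Set (EuclideanSpace ℝ (Fin n))) (hCne : C.Nonempty) (hCcl : IsClosed C)
    (hCco : Convex ℝ C) (hC0 : (0 : EuclideanSpace ℝ (Fin n)) ∈ C) :
    ∃ p : EuclideanSpace ℝ (Fin n) → EuclideanSpace ℝ (Fin n),
      -- (i) for every `z`, `p z` is the unique minimizer over `C` of
      -- `q ↦ ⟨S⁻¹ (q - S z), q - S z⟩`
      (∀ z : EuclideanSpace ℝ (Fin n), p z ∈ C ∧
        (∀ q ∈ C,
          ⟪Matrix.toEuclideanLin S⁻¹ (p z - Matrix.toEuclideanLin S z),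
              p z - Matrix.toEuclideanLin S z⟫ ≤
            ⟪Matrix.toEuclideanLin S⁻¹ (q - Matrix.toEuclideanLin S z),
              q - Matrix.toEuclideanLin S z⟫) ∧
        (∀ q ∈ C,
          ⟪Matrix.toEuclideanLin S⁻¹ (q - Matrix.toEuclideanLin S z),
              q - Matrix.toEuclideanLin S z⟫ =
            ⟪Matrix.toEuclideanLin S⁻¹ (p z - Matrix.toEuclideanLin S z),
              p z - Matrix.toEuclideanLin S z⟫ → q = p z)) ∧
      -- (ii) value of `ψ`
      (∀ z : EuclideanSpace ℝ (Fin n),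
        psi S C z =
          ((2⁻¹ * ⟪Matrix.toEuclideanLin S z, z⟫ -
            2⁻¹ * ⟪Matrix.toEuclideanLin S⁻¹ (p z - Matrix.toEuclideanLin S z),
              p z - Matrix.toEuclideanLin S z⟫ : ℝ) : EReal)) ∧
      -- (iii) `p` is Lipschitz continuous
      (∃ K : NNReal, LipschitzWith K p) ∧
      -- (iv) `ψ` is (real-valued and) differentiable everywhere with gradient `∇ψ(z) = p z`
      (∃ ψr : EuclideanSpace ℝ (Fin n) → ℝ,
        (∀ z, psi S C z = ((ψr z : ℝ) : EReal)) ∧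
        ∀ z, HasGradientAt ψr (p z) z) := by
  have hSinv : (S⁻¹).PosDef := hS.inv
  obtain ⟨c, hc, hcoer⟩ := coercive hn hSinv
  obtain ⟨cA, hcA, hcoerA⟩ := coercive hn hS
  have hBA : ∀ x : EuclideanSpace ℝ (Fin n),
      Matrix.toEuclideanLin S⁻¹ (Matrix.toEuclideanLin S x) = x := toEuclideanLin_comp_inv hS
  have hAB : ∀ x : EuclideanSpace ℝ (Fin n),
      Matrix.toEuclideanLin S (Matrix.toEuclideanLin S⁻¹ x) = x := toEuclideanLin_inv_comp hS
  have hsymB : ∀ x y : EuclideanSpace ℝ (Fin n),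
      ⟪Matrix.toEuclideanLin S⁻¹ x, y⟫ = ⟪x, Matrix.toEuclideanLin S⁻¹ y⟫ :=
    symm_toEuclideanLin hSinv.1
  have hsymA : ∀ x y : EuclideanSpace ℝ (Fin n),
      ⟪Matrix.toEuclideanLin S x, y⟫ = ⟪x, Matrix.toEuclideanLin S y⟫ :=
    symm_toEuclideanLin hS.1
  have hex : ∀ z : EuclideanSpace ℝ (Fin n), ∃ pz ∈ C, ∀ q ∈ C,
      ⟪Matrix.toEuclideanLin S⁻¹ (pz - Matrix.toEuclideanLin S z),
        pz - Matrix.toEuclideanLin S z⟫ ≤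
      ⟪Matrix.toEuclideanLin S⁻¹ (q - Matrix.toEuclideanLin S z),
        q - Matrix.toEuclideanLin S z⟫ :=
    fun z => exists_min hn hSinv hCcl hCne (Matrix.toEuclideanLin S z)
  choose p hpC hpmin using hex
  -- variational inequality
  have hVI : ∀ z : EuclideanSpace ℝ (Fin n), ∀ q ∈ C,
      ⟪z - Matrix.toEuclideanLin S⁻¹ (p z), q - p z⟫ ≤ 0 := by
    intro z q hq
    have h := min_to_VI hSinv hCco (hpC z) (hpmin z) q hq
    rwa [map_sub, hBA] at h
  have hcross : ∀ u v : EuclideanSpace ℝ (Fin n),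
      ⟪Matrix.toEuclideanLin S⁻¹ u, v⟫ = ⟪Matrix.toEuclideanLin S⁻¹ v, u⟫ := by
    intro u v
    rw [hsymB]; exact real_inner_comm _ _
  -- expansion identity
  have hident : ∀ z q : EuclideanSpace ℝ (Fin n),
      ⟪Matrix.toEuclideanLin S⁻¹ (q - Matrix.toEuclideanLin S z),
        q - Matrix.toEuclideanLin S z⟫ =
      ⟪Matrix.toEuclideanLin S⁻¹ q, q⟫ - 2 * ⟪q, z⟫ +
        ⟪Matrix.toEuclideanLin S⁻¹ (Matrix.toEuclideanLin S z), Matrix.toEuclideanLin S z⟫ := by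
    intro z q
    have h1 : ⟪Matrix.toEuclideanLin S⁻¹ (Matrix.toEuclideanLin S z), q⟫ = ⟪q, z⟫ := by
      rw [real_inner_comm, hBA]
    have h2 : ⟪Matrix.toEuclideanLin S⁻¹ q, Matrix.toEuclideanLin S z⟫ = ⟪q, z⟫ := by
      rw [hsymB, hBA]
    rw [map_sub, inner_sub_left, inner_sub_right, inner_sub_right, h1, h2]
    ring
  -- strong minimality
  have hstrong : ∀ z : EuclideanSpace ℝ (Fin n), ∀ q ∈ C,
      ⟪Matrix.toEuclideanLin S⁻¹ (p z - Matrix.toEuclideanLin S z),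
        p z - Matrix.toEuclideanLin S z⟫ + c * ‖q - p z‖^2 ≤
      ⟪Matrix.toEuclideanLin S⁻¹ (q - Matrix.toEuclideanLin S z),
        q - Matrix.toEuclideanLin S z⟫ := by
    intro z q hq
    have h3 := quad_expand hSinv.1 (Matrix.toEuclideanLin S z) (p z) q
    have h4 : Matrix.toEuclideanLin S⁻¹ (p z - Matrix.toEuclideanLin S z)
        = -(z - Matrix.toEuclideanLin S⁻¹ (p z)) := by
      rw [map_sub, hBA]; abel
    have h4' : ⟪Matrix.toEuclideanLin S⁻¹ (p z - Matrix.toEuclideanLin S z), q - p z⟫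
        = -⟪z - Matrix.toEuclideanLin S⁻¹ (p z), q - p z⟫ := by
      rw [h4, inner_neg_left]
    have h5 := hVI z q hq
    have h6 := hcoer (q - p z)
    linarith [h3, h4', h5, h6]
  -- the real-valued psi
  obtain ⟨ψr, hψr⟩ : ∃ ψr : EuclideanSpace ℝ (Fin n) → ℝ, ψr = fun z =>
      ⟪p z, z⟫ - 2⁻¹ * ⟪Matrix.toEuclideanLin S⁻¹ (p z), p z⟫ := ⟨_, rfl⟩
  have hpsival : ∀ z, psi S C z = ((ψr z : ℝ) : EReal) := by
    intro z
    have hsval : hsupp C (z - Matrix.toEuclideanLin S⁻¹ (p z))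
        = ((⟪p z, z - Matrix.toEuclideanLin S⁻¹ (p z)⟫ : ℝ) : EReal) := by
      apply le_antisymm
      · apply hsupp_le
        intro q hq
        have h5 := hVI z q hq
        have h7 : ⟪q - p z, z - Matrix.toEuclideanLin S⁻¹ (p z)⟫ ≤ 0 := by
          rw [real_inner_comm]; exact h5
        rw [inner_sub_left] at h7
        linarith
      · exact hsupp_ge C _ (hpC z)
    apply le_antisymm
    · have h8 := psi_le S C z (z - Matrix.toEuclideanLin S⁻¹ (p z))
      have h9 : z - (z - Matrix.toEuclideanLin S⁻¹ (p z)) = Matrix.toEuclideanLin S⁻¹ (p z) := by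
        abel
      rw [h9, hsval, ← EReal.coe_add] at h8
      have h10 : (2⁻¹ * ⟪Matrix.toEuclideanLin S (Matrix.toEuclideanLin S⁻¹ (p z)),
          Matrix.toEuclideanLin S⁻¹ (p z)⟫
          + ⟪p z, z - Matrix.toEuclideanLin S⁻¹ (p z)⟫) = ψr z := by
        have hcomm : ⟪p z, Matrix.toEuclideanLin S⁻¹ (p z)⟫
            = ⟪Matrix.toEuclideanLin S⁻¹ (p z), p z⟫ := real_inner_comm _ _
        rw [hψr, hAB, inner_sub_right, hcomm]
        ring
      rw [h10] at h8
      exact h8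
    · apply le_psi
      intro z'
      have h1 : ((⟪p z, z'⟫ : ℝ) : EReal) ≤ hsupp C z' := hsupp_ge C z' (hpC z)
      have hreal : ψr z ≤ 2⁻¹ * ⟪Matrix.toEuclideanLin S (z - z'), z - z'⟫ + ⟪p z, z'⟫ := by
        have hexp : ⟪Matrix.toEuclideanLin S ((z - z') - Matrix.toEuclideanLin S⁻¹ (p z)),
            (z - z') - Matrix.toEuclideanLin S⁻¹ (p z)⟫
            = ⟪Matrix.toEuclideanLin S⁻¹ (p z), p z⟫ - 2 * ⟪p z, z - z'⟫
              + ⟪Matrix.toEuclideanLin S (z - z'), z - z'⟫ := by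
          have e3 : ⟪p z, z - z'⟫ = ⟪Matrix.toEuclideanLin S (Matrix.toEuclideanLin S⁻¹ (p z)), z - z'⟫ := by
            rw [hAB]
          have e4 : ⟪Matrix.toEuclideanLin S (Matrix.toEuclideanLin S⁻¹ (p z)),
              Matrix.toEuclideanLin S⁻¹ (p z)⟫ = ⟪Matrix.toEuclideanLin S⁻¹ (p z), p z⟫ := by
            rw [hAB]; exact real_inner_comm _ _
          rw [quad_expand0 hS.1, e4, ← e3]
        have hpos : 0 ≤ ⟪Matrix.toEuclideanLin S ((z - z') - Matrix.toEuclideanLin S⁻¹ (p z)),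
            (z - z') - Matrix.toEuclideanLin S⁻¹ (p z)⟫ :=
          le_trans (mul_nonneg hcA.le (sq_nonneg _)) (hcoerA _)
        have hsub : ⟪p z, z'⟫ = ⟪p z, z⟫ - ⟪p z, z - z'⟫ := by
          rw [inner_sub_right]; ring
        rw [hψr]
        simp only []
        linarith [hexp, hpos, hsub]
      calc ((ψr z : ℝ) : EReal)
          ≤ ((2⁻¹ * ⟪Matrix.toEuclideanLin S (z - z'), z - z'⟫ + ⟪p z, z'⟫ : ℝ) : EReal) :=
            EReal.coe_le_coe_iff.mpr hreal
        _ = ((2⁻¹ * ⟪Matrix.toEuclideanLin S (z - z'), z - z'⟫ : ℝ) : EReal)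
            + ((⟪p z, z'⟫ : ℝ) : EReal) := EReal.coe_add _ _
        _ ≤ ((2⁻¹ * ⟪Matrix.toEuclideanLin S (z - z'), z - z'⟫ : ℝ) : EReal) + hsupp C z' :=
            add_le_add le_rfl h1
  -- Lipschitz bound
  have hLipR : ∀ z1 z2 : EuclideanSpace ℝ (Fin n), ‖p z1 - p z2‖ ≤ c⁻¹ * ‖z1 - z2‖ := by
    intro z1 z2
    rcases eq_or_ne (p z1) (p z2) with h|h
    · rw [h, sub_self, norm_zero]
      positivity
    · have h1 := hVI z1 (p z2) (hpC z2)
      have h2 := hVI z2 (p z1) (hpC z1)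
      have hcr : ⟪Matrix.toEuclideanLin S⁻¹ (p z1), p z2⟫
          = ⟪Matrix.toEuclideanLin S⁻¹ (p z2), p z1⟫ := hcross _ _
      have h6 := hcoer (p z1 - p z2)
      simp only [inner_sub_left, inner_sub_right, map_sub] at h1 h2 h6
      have h7 : c * ‖p z1 - p z2‖^2 ≤ ⟪z1 - z2, p z1 - p z2⟫ := by
        rw [inner_sub_left, inner_sub_right, inner_sub_right]
        linarith [h1, h2, hcr, h6]
      have h8 := real_inner_le_norm (z1 - z2) (p z1 - p z2)
      have h9 : 0 < ‖p z1 - p z2‖ := norm_pos_iff.mpr (sub_ne_zero.mpr h)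
      have h10 : c * ‖p z1 - p z2‖ ≤ ‖z1 - z2‖ := by nlinarith [h7, h8, h9]
      calc ‖p z1 - p z2‖ = c⁻¹ * (c * ‖p z1 - p z2‖) := by field_simp
        _ ≤ c⁻¹ * ‖z1 - z2‖ := mul_le_mul_of_nonneg_left h10 (inv_nonneg.mpr hc.le)
  refine ⟨p, ?_, ?_, ?_, ?_⟩
  · -- (i)
    intro z
    refine ⟨hpC z, hpmin z, fun q hq heq => ?_⟩
    have h := hstrong z q hq
    rw [heq] at h
    have hcx : c * ‖q - p z‖^2 ≤ 0 := by linarith [h]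
    have hx2 : ‖q - p z‖^2 = 0 := by
      rcases (sq_nonneg ‖q - p z‖).lt_or_eq with hlt | heq2
      · exfalso
        have := mul_pos hc hlt
        linarith
      · exact heq2.symm
    have h3 : ‖q - p z‖ = 0 := pow_eq_zero_iff two_ne_zero |>.mp hx2
    have h4 : q - p z = 0 := norm_eq_zero.mp h3
    exact sub_eq_zero.mp h4
  · -- (ii)
    intro z
    rw [hpsival z]
    have hAz : ⟪Matrix.toEuclideanLin S⁻¹ (Matrix.toEuclideanLin S z), Matrix.toEuclideanLin S z⟫
        = ⟪Matrix.toEuclideanLin S z, z⟫ := by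
      rw [hsymB, hBA]
    have hid : ψr z = 2⁻¹ * ⟪Matrix.toEuclideanLin S z, z⟫ -
        2⁻¹ * ⟪Matrix.toEuclideanLin S⁻¹ (p z - Matrix.toEuclideanLin S z),
          p z - Matrix.toEuclideanLin S z⟫ := by
      have h := hident z (p z)
      rw [hψr]
      simp only []
      linarith [h, hAz]
    rw [hid]
  · -- (iii)
    refine ⟨⟨c⁻¹, inv_nonneg.mpr hc.le⟩, ?_⟩
    apply LipschitzWith.of_dist_le_mul
    intro z1 z2
    rw [dist_eq_norm, dist_eq_norm]
    exact hLipR z1 z2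
  · -- (iv)
    refine ⟨ψr, hpsival, ?_⟩
    intro z
    have hgmax : ∀ y : EuclideanSpace ℝ (Fin n), ∀ q ∈ C,
        ⟪q, y⟫ - 2⁻¹ * ⟪Matrix.toEuclideanLin S⁻¹ q, q⟫ ≤ ψr y := by
      intro y q hq
      have h := hpmin y q hq
      rw [hψr]
      simp only []
      linarith [hident y q, hident y (p y), h]
    have hlow : ∀ y, ψr z + ⟪p z, y - z⟫ ≤ ψr y := by
      intro y
      have h := hgmax y (p z) (hpC z)
      have e : ⟪p z, y - z⟫ = ⟪p z, y⟫ - ⟪p z, z⟫ := inner_sub_right _ _ _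
      rw [hψr] at h ⊢
      simp only [] at h ⊢
      linarith [h, e]
    have hup : ∀ y, ψr y ≤ ψr z + ⟪p z, y - z⟫ + c⁻¹ * ‖y - z‖^2 := by
      intro y
      have h := hgmax z (p y) (hpC y)
      have e1 : ⟪p y, y - z⟫ = ⟪p y, y⟫ - ⟪p y, z⟫ := inner_sub_right _ _ _
      have e3 : ⟪p y - p z, y - z⟫ = ⟪p y, y - z⟫ - ⟪p z, y - z⟫ := inner_sub_left _ _ _
      have h4 : ⟪p y - p z, y - z⟫ ≤ ‖p y - p z‖ * ‖y - z‖ := real_inner_le_norm _ _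
      have h5 := hLipR y z
      have h6 : ‖p y - p z‖ * ‖y - z‖ ≤ (c⁻¹ * ‖y - z‖) * ‖y - z‖ :=
        mul_le_mul_of_nonneg_right h5 (norm_nonneg _)
      have e7 : (c⁻¹ * ‖y - z‖) * ‖y - z‖ = c⁻¹ * ‖y - z‖^2 := by ring
      rw [hψr]
      simp only []
      rw [hψr] at h
      linarith [h, e1, e3, h4, h6, e7]
    rw [hasGradientAt_iff_isLittleO]
    rw [Asymptotics.isLittleO_iff]
    intro ε hε
    have hev : ∀ᶠ y in nhds z, ‖y - z‖ < ε * c := by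
      have hball : Metric.ball z (ε * c) ∈ nhds z := Metric.ball_mem_nhds z (by positivity)
      filter_upwards [hball] with y hy
      rwa [Metric.mem_ball, dist_eq_norm] at hy
    filter_upwards [hev] with y hy
    have hb1 := hlow y
    have hb2 := hup y
    have habs : |ψr y - ψr z - ⟪p z, y - z⟫| ≤ c⁻¹ * ‖y - z‖^2 := by
      apply abs_le.mpr
      constructor
      · have : 0 ≤ c⁻¹ * ‖y - z‖^2 := by positivity
        linarith
      · linarith
    rw [Real.norm_eq_abs]
    calc |ψr y - ψr z - ⟪p z, y - z⟫| ≤ c⁻¹ * ‖y - z‖^2 := habs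
      _ = (c⁻¹ * ‖y - z‖) * ‖y - z‖ := by ring
      _ ≤ ε * ‖y - z‖ := by
          apply mul_le_mul_of_nonneg_right _ (norm_nonneg _)
          calc c⁻¹ * ‖y - z‖ ≤ c⁻¹ * (ε * c) :=
                mul_le_mul_of_nonneg_left hy.le (inv_nonneg.mpr hc.le)
            _ = ε := by field_simp
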